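/- arXiv:1203.3002 — 3 statements merged into one kernel-verified Lean document; each statement's English description precedes it below -/
import Mathlib

section
/- Let f : ℝⁿ → ℝ be a convex differentiable function and Ψ : ℝⁿ → ℝ a convex function, and set φ = f + Ψ. Fix L > 0 and y ∈ ℝⁿ, define ψ_L(y;x) = f(y) + ⟨∇f(y), x − y⟩ + (L/2)‖x − y‖₂² + Ψ(x), let T_L(y) be a minimizer of x ↦ ψ_L(y;x), and set g_L(y) = L(y − T_L(y)). Then ψ_L(y; T_L(y)) ≤ φ(y) − (1/(2L))‖g_L(y)‖₂². -/
open scoped BigOperators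
open Matrix

noncomputable section

namespace PGH

/-- Euclidean dot product on `Fin n → ℝ`. -/
def dot {n : ℕ} (x y : Fin n → ℝ) : ℝ := ∑ i, x i * y i

/-- Squared Euclidean norm. -/
def sqnorm {n : ℕ} (x : Fin n → ℝ) : ℝ := ∑ i, (x i) ^ 2

/-- Euclidean (ℓ₂) norm. -/
noncomputable def l2 {n : ℕ} (x : Fin n → ℝ) : ℝ := Real.sqrt (sqnorm x)

/-- ℓ₁ norm. -/
def l1 {n : ℕ} (x : Fin n → ℝ) : ℝ := ∑ i, |x i|

/-- ℓ∞ norm (maximum absolute coordinate). -/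
noncomputable def linf {n : ℕ} (x : Fin n → ℝ) : ℝ := ⨆ i, |x i|

/-- Support of a vector. -/
def supp {n : ℕ} (x : Fin n → ℝ) : Finset (Fin n) := Finset.univ.filter (fun i => x i ≠ 0)

/-- Number of nonzero coordinates. -/
def l0 {n : ℕ} (x : Fin n → ℝ) : ℕ := (supp x).card

/-- Number of nonzero coordinates within the index set `S`
(i.e. `‖x_S‖₀` for the restriction of `x` to `S`). -/
def l0on {n : ℕ} (S : Finset (Fin n)) (x : Fin n → ℝ) : ℕ :=
  (S.filter (fun i => x i ≠ 0)).card

/-- ℓ₁ norm of the restriction of `x` to the index set `S`. -/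
def l1on {n : ℕ} (S : Finset (Fin n)) (x : Fin n → ℝ) : ℝ := ∑ i ∈ S, |x i|

/-- Gradient of `f(x) = (1/2)‖Ax - b‖₂²`, namely `Aᵀ(Ax - b)`. -/
def grad {m n : ℕ} (A : Matrix (Fin m) (Fin n) ℝ) (b : Fin m → ℝ) (x : Fin n → ℝ) :
    Fin n → ℝ :=
  Aᵀ.mulVec (A.mulVec x - b)

/-- Least-squares objective `f(x) = (1/2)‖Ax - b‖₂²`. -/
def fls {m n : ℕ} (A : Matrix (Fin m) (Fin n) ℝ) (b : Fin m → ℝ) (x : Fin n → ℝ) : ℝ :=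
  sqnorm (A.mulVec x - b) / 2

/-- ℓ₁-regularized least-squares objective `φ_λ(x) = f(x) + λ‖x‖₁`. -/
def phi {m n : ℕ} (A : Matrix (Fin m) (Fin n) ℝ) (b : Fin m → ℝ) (lam : ℝ)
    (x : Fin n → ℝ) : ℝ :=
  fls A b x + lam * l1 x

/-- Restricted maximal eigenvalue `ρ₊(A, s)`. -/
noncomputable def rhoPlus {m n : ℕ} (A : Matrix (Fin m) (Fin n) ℝ) (s : ℕ) : ℝ :=
  sSup {r | ∃ x : Fin n → ℝ, x ≠ 0 ∧ l0 x ≤ s ∧ r = sqnorm (A.mulVec x) / sqnorm x}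

/-- Restricted minimal eigenvalue `ρ₋(A, s)`. -/
noncomputable def rhoMinus {m n : ℕ} (A : Matrix (Fin m) (Fin n) ℝ) (s : ℕ) : ℝ :=
  sInf {r | ∃ x : Fin n → ℝ, x ≠ 0 ∧ l0 x ≤ s ∧ r = sqnorm (A.mulVec x) / sqnorm x}

/-- `ξ` is a subgradient of the ℓ₁ norm at `x`. -/
def IsSubgrad {n : ℕ} (x ξ : Fin n → ℝ) : Prop :=
  ∀ i, (x i ≠ 0 → ξ i = Real.sign (x i)) ∧ (x i = 0 → |ξ i| ≤ 1)

/-- Optimality residue `ω_λ(x) = min_{ξ ∈ ∂‖x‖₁} ‖Aᵀ(Ax−b) + λξ‖_∞`. -/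
noncomputable def omega {m n : ℕ} (A : Matrix (Fin m) (Fin n) ℝ) (b : Fin m → ℝ)
    (lam : ℝ) (x : Fin n → ℝ) : ℝ :=
  sInf {r | ∃ ξ : Fin n → ℝ, IsSubgrad x ξ ∧
    r = linf (fun i => grad A b x i + lam * ξ i)}

/-- The local model `ψ_{λ,L}(y; x)`. -/
def psi {m n : ℕ} (A : Matrix (Fin m) (Fin n) ℝ) (b : Fin m → ℝ) (lam L : ℝ)
    (y x : Fin n → ℝ) : ℝ :=
  fls A b y + dot (grad A b y) (x - y) + L / 2 * sqnorm (x - y) + lam * l1 x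

/-- The noise-domination condition
`λ ≥ max{4, (γ+1)/((1−δ')γ−(1+δ'))} ⬝ ‖Aᵀz‖_∞`. -/
def noiseCond {m n : ℕ} (A : Matrix (Fin m) (Fin n) ℝ) (z : Fin m → ℝ)
    (dp gam lam : ℝ) : Prop :=
  lam ≥ max 4 ((gam + 1) / ((1 - dp) * gam - (1 + dp))) * linf (Aᵀ.mulVec z)

theorem stmt0 {n : ℕ} (f Ψ : EuclideanSpace ℝ (Fin n) → ℝ)
    (f' : EuclideanSpace ℝ (Fin n) → EuclideanSpace ℝ (Fin n))
    (hf : ConvexOn ℝ Set.univ f) (hΨ : ConvexOn ℝ Set.univ Ψ)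
    (hf' : ∀ x, HasGradientAt f (f' x) x)
    (L : ℝ) (hL : 0 < L) (y : EuclideanSpace ℝ (Fin n))
    (ψ : EuclideanSpace ℝ (Fin n) → ℝ)
    (hψ : ∀ x, ψ x = f y + (inner ℝ (f' y) (x - y) : ℝ) + L / 2 * ‖x - y‖ ^ 2 + Ψ x)
    (T : EuclideanSpace ℝ (Fin n)) (hT : ∀ x, ψ T ≤ ψ x) :
    ψ T ≤ (f y + Ψ y) - 1 / (2 * L) * ‖L • (y - T)‖ ^ 2 := by
  set I : ℝ := (inner ℝ (f' y) (T - y) : ℝ) with hI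
  set N : ℝ := ‖T - y‖ ^ 2 with hNd
  have hN : 0 ≤ N := by rw [hNd]; positivity
  have key : ∀ t : ℝ, 0 < t → t ≤ 1 → I + Ψ T + L / 2 * (2 - t) * N ≤ Ψ y := by
    intro t ht0 ht1
    have hconv := hΨ.2 (Set.mem_univ T) (Set.mem_univ y)
      (by linarith : (0:ℝ) ≤ 1 - t) ht0.le (by ring)
    have hxt := hT ((1 - t) • T + t • y)
    rw [hψ, hψ] at hxt
    have h1 : (1 - t) • T + t • y - y = (1 - t) • (T - y) := by module
    have h2 : (inner ℝ (f' y) ((1 - t) • T + t • y - y) : ℝ) = (1 - t) * I := by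
      rw [h1, real_inner_smul_right, hI]
    have h3 : ‖(1 - t) • T + t • y - y‖ ^ 2 = (1 - t) ^ 2 * N := by
      rw [h1, norm_smul, Real.norm_eq_abs, abs_of_nonneg (by linarith : (0:ℝ) ≤ 1 - t),
        mul_pow, hNd]
    rw [h2, h3, ← hI, ← hNd] at hxt
    rw [smul_eq_mul, smul_eq_mul] at hconv
    have h4 : t * (I + Ψ T + L / 2 * (2 - t) * N) ≤ t * Ψ y := by nlinarith [hxt, hconv]
    exact le_of_mul_le_mul_left h4 ht0
  have hfin : I + Ψ T + L * N ≤ Ψ y := by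
    by_contra hcon
    push_neg at hcon
    have h1 := key 1 one_pos le_rfl
    have hN0 : 0 < N := by nlinarith
    set D := I + Ψ T + L * N - Ψ y with hD
    have hD0 : 0 < D := by rw [hD]; linarith
    have hLN : 0 < L * N := mul_pos hL hN0
    have ht0 : 0 < min 1 (D / (L * N)) := lt_min one_pos (div_pos hD0 hLN)
    have h2 := key _ ht0 (min_le_left _ _)
    have hmin : min 1 (D / (L * N)) ≤ D / (L * N) := min_le_right _ _
    have hmul : (L * N / 2) * min 1 (D / (L * N)) ≤ (L * N / 2) * (D / (L * N)) :=
      mul_le_mul_of_nonneg_left hmin (by positivity)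
    have heq : (L * N / 2) * (D / (L * N)) = D / 2 := by
      field_simp
    rw [heq] at hmul
    nlinarith [h2, hmul, hD0]
  rw [hψ]
  have hn : ‖L • (y - T)‖ ^ 2 = L ^ 2 * N := by
    rw [norm_smul, Real.norm_eq_abs, abs_of_pos hL, norm_sub_rev, mul_pow, hNd]
  rw [hn, ← hI, ← hNd]
  have hEq : 1 / (2 * L) * (L ^ 2 * N) = L / 2 * N := by
    field_simp
  rw [hEq]
  linarith [hfin]


end PGH
end
end

section
/- Fix λ > 0, L > 0 and y ∈ ℝⁿ, and let T = T_{λ,L}(y). Then: (i) ω_λ(T) ≤ (1 + ‖A‖_op²/L) · ‖g_{λ,L}(y)‖₂, where ‖A‖_op is the operator norm of A (so ‖A‖_op² is the Lipschitz constant of x ↦ Aᵀ(Ax−b)); and (ii) if T ≠ y, then ω_λ(T) ≤ (1 + S/L) · ‖g_{λ,L}(y)‖₂, where S = ‖AᵀA(T − y)‖₂ / ‖T − y‖₂. -/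
open scoped BigOperators
open Matrix

noncomputable section

namespace PGH

/-- Operator norm of `A` with respect to Euclidean norms. -/
noncomputable def opNorm {m n : ℕ} (A : Matrix (Fin m) (Fin n) ℝ) : ℝ :=
  sSup {r | ∃ x : Fin n → ℝ, x ≠ 0 ∧ r = l2 (A.mulVec x) / l2 x}

lemma sqnorm_nonneg {n : ℕ} (x : Fin n → ℝ) : 0 ≤ sqnorm x :=
  Finset.sum_nonneg fun _ _ => sq_nonneg _

lemma l2_nonneg {n : ℕ} (x : Fin n → ℝ) : 0 ≤ l2 x := Real.sqrt_nonneg _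

lemma sq_l2 {n : ℕ} (x : Fin n → ℝ) : l2 x ^ 2 = sqnorm x :=
  Real.sq_sqrt (sqnorm_nonneg x)

lemma abs_le_l2 {n : ℕ} (x : Fin n → ℝ) (i : Fin n) : |x i| ≤ l2 x := by
  rw [← Real.sqrt_sq_eq_abs]
  exact Real.sqrt_le_sqrt (Finset.single_le_sum (f := fun j => x j ^ 2)
    (fun j _ => sq_nonneg _) (Finset.mem_univ i))

lemma l2_pos {n : ℕ} {x : Fin n → ℝ} (hx : x ≠ 0) : 0 < l2 x := by
  obtain ⟨i, hi⟩ := Function.ne_iff.mp hx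
  have h1 : (0:ℝ) < x i ^ 2 := by
    have : x i ≠ 0 := hi
    positivity
  have h2 : (0:ℝ) < sqnorm x :=
    lt_of_lt_of_le h1 (Finset.single_le_sum (f := fun j => x j ^ 2)
      (fun j _ => sq_nonneg _) (Finset.mem_univ i))
  exact Real.sqrt_pos.mpr h2

lemma dot_le_l2 {n : ℕ} (u v : Fin n → ℝ) : dot u v ≤ l2 u * l2 v := by
  have h := Finset.sum_mul_sq_le_sq_mul_sq Finset.univ u v
  refine (le_abs_self _).trans ?_
  rw [← Real.sqrt_sq_eq_abs]
  calc Real.sqrt (dot u v ^ 2) ≤ Real.sqrt (sqnorm u * sqnorm v) := by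
        apply Real.sqrt_le_sqrt
        simpa [dot, sqnorm] using h
    _ = l2 u * l2 v := by
        rw [l2, l2, ← Real.sqrt_mul (sqnorm_nonneg u)]

lemma dot_transpose {m n : ℕ} (A : Matrix (Fin m) (Fin n) ℝ) (u : Fin m → ℝ)
    (v : Fin n → ℝ) : dot (Aᵀ.mulVec u) v = dot u (A.mulVec v) := by
  simp only [dot, Matrix.mulVec, dotProduct, Matrix.transpose_apply,
    Finset.sum_mul, Finset.mul_sum]
  rw [Finset.sum_comm]
  exact Finset.sum_congr rfl fun i _ => Finset.sum_congr rfl fun j _ => by ring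

lemma frobenius_bound {m n : ℕ} (A : Matrix (Fin m) (Fin n) ℝ) (x : Fin n → ℝ) :
    l2 (A.mulVec x) ≤ Real.sqrt (∑ i, ∑ j, A i j ^ 2) * l2 x := by
  rw [l2, l2, ← Real.sqrt_mul (by positivity)]
  apply Real.sqrt_le_sqrt
  have h1 : sqnorm (A.mulVec x) ≤ ∑ i, (∑ j, A i j ^ 2) * sqnorm x := by
    apply Finset.sum_le_sum
    intro i _
    have := Finset.sum_mul_sq_le_sq_mul_sq Finset.univ (A i) x
    simpa [Matrix.mulVec, dotProduct, sqnorm] using this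
  calc sqnorm (A.mulVec x) ≤ ∑ i, (∑ j, A i j ^ 2) * sqnorm x := h1
    _ = (∑ i, ∑ j, A i j ^ 2) * sqnorm x := by rw [Finset.sum_mul]

lemma opNorm_nonneg {m n : ℕ} (A : Matrix (Fin m) (Fin n) ℝ) : 0 ≤ opNorm A := by
  apply Real.sSup_nonneg
  rintro r ⟨v, hv, rfl⟩
  exact div_nonneg (l2_nonneg _) (l2_nonneg _)

lemma mulVec_l2_le {m n : ℕ} (A : Matrix (Fin m) (Fin n) ℝ) (x : Fin n → ℝ) :
    l2 (A.mulVec x) ≤ opNorm A * l2 x := by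
  by_cases hx : x = 0
  · subst hx
    simp only [Matrix.mulVec_zero]
    have : l2 (0 : Fin m → ℝ) = 0 := by simp [l2, sqnorm]
    have h0 : l2 (0 : Fin n → ℝ) = 0 := by simp [l2, sqnorm]
    rw [this, h0, mul_zero]
  · have hl2 : 0 < l2 x := l2_pos hx
    have hbdd : BddAbove {r | ∃ v : Fin n → ℝ, v ≠ 0 ∧ r = l2 (A.mulVec v) / l2 v} := by
      refine ⟨Real.sqrt (∑ i, ∑ j, A i j ^ 2), ?_⟩
      rintro r ⟨v, hv, rfl⟩
      rw [div_le_iff₀ (l2_pos hv)]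
      exact frobenius_bound A v
    have hmem : l2 (A.mulVec x) / l2 x ∈
        {r | ∃ v : Fin n → ℝ, v ≠ 0 ∧ r = l2 (A.mulVec v) / l2 v} := ⟨x, hx, rfl⟩
    have hle : l2 (A.mulVec x) / l2 x ≤ opNorm A := le_csSup hbdd hmem
    calc l2 (A.mulVec x) = (l2 (A.mulVec x) / l2 x) * l2 x := by field_simp
      _ ≤ opNorm A * l2 x := mul_le_mul_of_nonneg_right hle hl2.le

lemma AtA_l2_le {m n : ℕ} (A : Matrix (Fin m) (Fin n) ℝ) (x : Fin n → ℝ) :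
    l2 (Aᵀ.mulVec (A.mulVec x)) ≤ opNorm A ^ 2 * l2 x := by
  set W := Aᵀ.mulVec (A.mulVec x) with hW
  have key : l2 W ^ 2 ≤ opNorm A ^ 2 * l2 x * l2 W := by
    have h1 : l2 W ^ 2 = dot (A.mulVec x) (A.mulVec W) := by
      rw [sq_l2]
      have h2 : sqnorm W = dot W W := by
        simp only [sqnorm, dot, sq]
      rw [h2, hW, dot_transpose]
    calc l2 W ^ 2 = dot (A.mulVec x) (A.mulVec W) := h1
      _ ≤ l2 (A.mulVec x) * l2 (A.mulVec W) := dot_le_l2 _ _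
      _ ≤ (opNorm A * l2 x) * (opNorm A * l2 W) := by
          apply mul_le_mul (mulVec_l2_le A x) (mulVec_l2_le A W) (l2_nonneg _)
          exact mul_nonneg (opNorm_nonneg A) (l2_nonneg x)
      _ = opNorm A ^ 2 * l2 x * l2 W := by ring
  rcases eq_or_lt_of_le (l2_nonneg W) with h0 | hpos
  · rw [← h0]
    exact mul_nonneg (sq_nonneg _) (l2_nonneg x)
  · nlinarith [key, hpos]

lemma onedim {c L lam a w : ℝ} (hL : 0 < L) (hlam : 0 < lam)
    (h : ∀ t : ℝ, c * (a - w) + L / 2 * (a - w) ^ 2 + lam * |a| ≤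
      c * (t - w) + L / 2 * (t - w) ^ 2 + lam * |t|) :
    (a ≠ 0 → (-(c + L * (a - w))) / lam = Real.sign a) ∧
    (a = 0 → |(-(c + L * (a - w))) / lam| ≤ 1) := by
  constructor
  · intro ha
    set K := c + L * (a - w) + lam * Real.sign a with hKdef
    have key : ∀ ε : ℝ, |ε| ≤ |a| → 0 ≤ K * ε + L / 2 * ε ^ 2 := by
      intro ε hε
      have h' := h (a + ε)
      have habs : |a + ε| - |a| = Real.sign a * ε := by
        rcases ha.lt_or_gt with hneg | hpos
        · rw [Real.sign_of_neg hneg]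
          rw [abs_of_neg hneg] at hε
          obtain ⟨hε1, hε2⟩ := abs_le.mp hε
          have hle : a + ε ≤ 0 := by linarith
          rw [abs_of_nonpos hle, abs_of_neg hneg]; ring
        · rw [Real.sign_of_pos hpos]
          rw [abs_of_pos hpos] at hε
          obtain ⟨hε1, hε2⟩ := abs_le.mp hε
          have hge : 0 ≤ a + ε := by linarith
          rw [abs_of_nonneg hge, abs_of_pos hpos]; ring
      nlinarith [h', habs]
    have hK0 : K = 0 := by
      by_contra hKne
      have hKabs : 0 < |K| := abs_pos.mpr hKne
      have haabs : 0 < |a| := abs_pos.mpr ha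
      set τ := min (1 / L) (|a| / |K|) with hτdef
      have hτpos : 0 < τ := lt_min (by positivity) (by positivity)
      have hτ1 : τ ≤ 1 / L := min_le_left _ _
      have hLτ : L * τ ≤ 1 := by
        have := (le_div_iff₀ hL).mp hτ1
        linarith
      have hτ2 : τ ≤ |a| / |K| := min_le_right _ _
      have hεabs : |(-K * τ)| ≤ |a| := by
        rw [abs_mul, abs_neg, abs_of_pos hτpos]
        calc |K| * τ ≤ |K| * (|a| / |K|) :=
              mul_le_mul_of_nonneg_left hτ2 (abs_nonneg K)
          _ = |a| := by field_simp
      have hkey := key (-K * τ) hεabs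
      have hK2 : 0 < K ^ 2 := lt_of_le_of_ne (sq_nonneg K) (Ne.symm (pow_ne_zero 2 hKne))
      have hK2τ : 0 < K ^ 2 * τ := mul_pos hK2 hτpos
      clear_value K τ
      nlinarith [hkey, hK2τ, mul_le_mul_of_nonneg_right hLτ hK2τ.le, hτpos, hK2]
    rw [hKdef] at hK0
    field_simp
    linarith
  · intro ha
    subst ha
    have h1 : 0 ≤ c - L * w + lam := by
      by_contra hcon
      push_neg at hcon
      set D := c - L * w + lam with hD
      set τ := -D / L with hτ
      have hτpos : 0 < τ := div_pos (neg_pos.mpr hcon) hL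
      have h' := h τ
      rw [abs_of_pos hτpos] at h'
      simp only [abs_zero] at h'
      have hLτ : L * τ = -D := by
        rw [hτ, mul_comm]
        exact div_mul_cancel₀ _ hL.ne'
      nlinarith [h', hLτ, hτpos, hcon]
    have h2 : 0 ≤ -(c - L * w) + lam := by
      by_contra hcon
      push_neg at hcon
      set D := -(c - L * w) + lam with hD
      set τ := -D / L with hτ
      have hτpos : 0 < τ := div_pos (neg_pos.mpr hcon) hL
      have h' := h (-τ)
      rw [abs_neg, abs_of_pos hτpos] at h'
      simp only [abs_zero] at h'
      have hLτ : L * τ = -D := by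
        rw [hτ, mul_comm]
        exact div_mul_cancel₀ _ hL.ne'
      nlinarith [h', hLτ, hτpos, hcon]
    rw [abs_div, abs_of_pos hlam, div_le_one hlam, abs_le]
    constructor <;> [nlinarith [h2]; nlinarith [h1]]

lemma sum_update {n : ℕ} (F : Fin n → ℝ → ℝ) (T : Fin n → ℝ) (i : Fin n) (t : ℝ) :
    ∑ j, F j (Function.update T i t j) = (∑ j, F j (T j)) - F i (T i) + F i t := by
  rw [Finset.sum_congr rfl fun j _ => Function.apply_update F T i t j,
    Finset.sum_update_of_mem (Finset.mem_univ i),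
    Finset.sum_eq_sum_sdiff_singleton_add (Finset.mem_univ i) (fun k => F k (T k))]
  ring

theorem stmt1 {m n : ℕ} (A : Matrix (Fin m) (Fin n) ℝ) (b : Fin m → ℝ)
    (lam L : ℝ) (hlam : 0 < lam) (hL : 0 < L) (y T : Fin n → ℝ)
    (hT : ∀ u, psi A b lam L y T ≤ psi A b lam L y u) :
    omega A b lam T ≤ (1 + opNorm A ^ 2 / L) * l2 (fun i => L * (y i - T i)) ∧
    (T ≠ y →
      omega A b lam T ≤
        (1 + (l2 (Aᵀ.mulVec (A.mulVec (T - y))) / l2 (T - y)) / L) *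
          l2 (fun i => L * (y i - T i))) := by
  classical
  -- per-coordinate optimality
  have coord : ∀ i : Fin n, ∀ t : ℝ,
      grad A b y i * (T i - y i) + L / 2 * (T i - y i) ^ 2 + lam * |T i| ≤
      grad A b y i * (t - y i) + L / 2 * (t - y i) ^ 2 + lam * |t| := by
    intro i t
    have h := hT (Function.update T i t)
    simp only [psi] at h
    have hdot : dot (grad A b y) (Function.update T i t - y) =
        dot (grad A b y) (T - y) - grad A b y i * (T i - y i) + grad A b y i * (t - y i) := by
      have := sum_update (fun j s => grad A b y j * (s - y j)) T i t
      simpa [dot, Pi.sub_apply] using this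
    have hsq : sqnorm (Function.update T i t - y) =
        sqnorm (T - y) - (T i - y i) ^ 2 + (t - y i) ^ 2 := by
      have := sum_update (fun j s => (s - y j) ^ 2) T i t
      simpa [sqnorm, Pi.sub_apply] using this
    have hl1 : l1 (Function.update T i t) = l1 T - |T i| + |t| := by
      have := sum_update (fun _ s => |s|) T i t
      simpa [l1] using this
    rw [hdot, hsq, hl1] at h
    nlinarith [h]
  -- the subgradient witness
  set ξ : Fin n → ℝ := fun i => (-(grad A b y i + L * (T i - y i))) / lam with hξ
  have hone : ∀ i : Fin n,
      (T i ≠ 0 → (-(grad A b y i + L * (T i - y i))) / lam = Real.sign (T i)) ∧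
      (T i = 0 → |(-(grad A b y i + L * (T i - y i))) / lam| ≤ 1) := fun i =>
    onedim hL hlam (coord i)
  have hsub : IsSubgrad T ξ := fun i => hone i
  set W := Aᵀ.mulVec (A.mulVec (T - y)) with hWdef
  have hgradT : ∀ i, grad A b T i + lam * ξ i = W i + L * (y i - T i) := by
    intro i
    have hdiff : grad A b T - grad A b y = W := by
      simp only [grad, hWdef]
      rw [← Matrix.mulVec_sub, sub_sub_sub_cancel_right, ← Matrix.mulVec_sub]
    have hi := congrFun hdiff i
    simp only [Pi.sub_apply] at hi
    have hξi : lam * ξ i = -(grad A b y i + L * (T i - y i)) := by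
      rw [hξ]
      field_simp
    rw [hξi]
    linarith [hi]
  -- omega bound
  have homega : omega A b lam T ≤ l2 W + l2 (fun i => L * (y i - T i)) := by
    have hbdd : BddBelow {r | ∃ ξ' : Fin n → ℝ, IsSubgrad T ξ' ∧
        r = linf (fun i => grad A b T i + lam * ξ' i)} := by
      refine ⟨0, ?_⟩
      rintro r ⟨ξ', _, rfl⟩
      exact Real.iSup_nonneg fun i => abs_nonneg _
    have hmem : linf (fun i => grad A b T i + lam * ξ i) ∈
        {r | ∃ ξ' : Fin n → ℝ, IsSubgrad T ξ' ∧
          r = linf (fun i => grad A b T i + lam * ξ' i)} := ⟨ξ, hsub, rfl⟩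
    have h1 : omega A b lam T ≤ linf (fun i => grad A b T i + lam * ξ i) :=
      csInf_le hbdd hmem
    refine h1.trans ?_
    apply Real.iSup_le
    · intro i
      calc |grad A b T i + lam * ξ i| = |W i + L * (y i - T i)| := by rw [hgradT i]
        _ ≤ |W i| + |L * (y i - T i)| := abs_add_le _ _
        _ ≤ l2 W + l2 (fun i => L * (y i - T i)) :=
            add_le_add (abs_le_l2 W i) (abs_le_l2 (fun i => L * (y i - T i)) i)
    · exact add_nonneg (l2_nonneg _) (l2_nonneg _)
  have hsn : sqnorm (fun i => L * (y i - T i)) = L ^ 2 * sqnorm (T - y) := by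
    simp only [sqnorm, Pi.sub_apply, Finset.mul_sum]
    exact Finset.sum_congr rfl fun i _ => by ring
  have hscale : l2 (fun i => L * (y i - T i)) = L * l2 (T - y) := by
    simp only [l2, hsn]
    rw [Real.sqrt_mul (sq_nonneg L), Real.sqrt_sq hL.le]
  constructor
  · have hAtA : l2 W ≤ opNorm A ^ 2 * l2 (T - y) := AtA_l2_le A (T - y)
    have key : omega A b lam T ≤ opNorm A ^ 2 * l2 (T - y) + L * l2 (T - y) := by
      rw [hscale] at homega
      linarith [homega, hAtA]
    have heq : (1 + opNorm A ^ 2 / L) * l2 (fun i => L * (y i - T i)) =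
        opNorm A ^ 2 * l2 (T - y) + L * l2 (T - y) := by
      rw [hscale]
      field_simp
      ring
    rw [heq]
    exact key
  · intro hTy
    have hd : 0 < l2 (T - y) := l2_pos (sub_ne_zero.mpr hTy)
    have heq : (1 + (l2 W / l2 (T - y)) / L) * l2 (fun i => L * (y i - T i)) =
        l2 W + L * l2 (T - y) := by
      rw [hscale]
      field_simp
      ring
    rw [heq]
    rw [hscale] at homega
    linarith [homega]

end PGH
end
end

section
/- Assume b = A x̄ + z, and let δ' ∈ (0,1), γ > (1+δ')/(1−δ'), and λ > 0 satisfy λ ≥ max{4, (γ+1)/((1−δ')γ − (1+δ'))} · ‖Aᵀz‖_∞. Let s̃ ≥ 1 be an integer with ρ₋(A, s̄+s̃) > 0. If x ∈ ℝⁿ satisfies ‖x_{S̄ᶜ}‖₀ ≤ s̃ and φ_λ(x) ≤ φ_λ(x̄) + 2δ'(1+γ)λ² s̄ / ρ₋(A, s̄+s̃), then max{ (1/(2λ))‖A(x − x̄)‖₂², ‖x − x̄‖₁ } ≤ 4(1+γ)λ s̄ / ρ₋(A, s̄+s̃). -/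
open scoped BigOperators
open Matrix

noncomputable section

namespace PGH

lemma sqnorm_sub {n : ℕ} (u v : Fin n → ℝ) :
    sqnorm (u - v) = sqnorm u - 2 * dot u v + sqnorm v := by
  simp only [sqnorm, dot, Pi.sub_apply, Finset.mul_sum]
  rw [← Finset.sum_sub_distrib, ← Finset.sum_add_distrib]
  exact Finset.sum_congr rfl fun i _ => by ring

lemma sqnorm_neg {n : ℕ} (v : Fin n → ℝ) : sqnorm (-v) = sqnorm v := by
  simp [sqnorm]

lemma dot_mulVec {m n : ℕ} (A : Matrix (Fin m) (Fin n) ℝ) (u : Fin n → ℝ) (z : Fin m → ℝ) :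
    dot (A.mulVec u) z = dot u (Aᵀ.mulVec z) := by
  simp only [dot, Matrix.mulVec, dotProduct, Matrix.transpose_apply,
    Finset.sum_mul, Finset.mul_sum]
  rw [Finset.sum_comm]
  exact Finset.sum_congr rfl fun i _ => Finset.sum_congr rfl fun j _ => by ring

lemma linf_nonneg {n : ℕ} (v : Fin n → ℝ) : 0 ≤ linf v :=
  Real.iSup_nonneg fun i => abs_nonneg _

lemma abs_dot_le {n : ℕ} (u v : Fin n → ℝ) : |dot u v| ≤ linf v * l1 u := by
  have hb : ∀ i, |v i| ≤ linf v := fun i => by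
    rw [linf]; exact le_ciSup (Set.Finite.bddAbove (Set.finite_range fun j => |v j|)) i
  calc |dot u v| ≤ ∑ i, |u i * v i| := Finset.abs_sum_le_sum_abs _ _
    _ = ∑ i, |v i| * |u i| := Finset.sum_congr rfl fun i _ => by rw [abs_mul, mul_comm]
    _ ≤ ∑ i, linf v * |u i| :=
        Finset.sum_le_sum fun i _ => mul_le_mul_of_nonneg_right (hb i) (abs_nonneg _)
    _ = linf v * l1 u := by rw [l1, Finset.mul_sum]

lemma l1_split {n : ℕ} (S : Finset (Fin n)) (h : Fin n → ℝ) :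
    l1 h = l1on S h + l1on Sᶜ h :=
  (Finset.sum_add_sum_compl S _).symm

lemma l1on_sq_le {n : ℕ} (S : Finset (Fin n)) (h : Fin n → ℝ) :
    (l1on S h) ^ 2 ≤ (S.card : ℝ) * sqnorm h := by
  have h1 := Finset.sum_mul_sq_le_sq_mul_sq S (fun _ => (1:ℝ)) (fun i => |h i|)
  simp only [one_mul, one_pow, sq_abs] at h1
  have h2 : ∑ i ∈ S, (h i)^2 ≤ sqnorm h :=
    Finset.sum_le_sum_of_subset_of_nonneg (Finset.subset_univ S) fun i _ _ => sq_nonneg _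
  have h3 : (∑ _i ∈ S, (1:ℝ)) = (S.card : ℝ) := by simp
  calc (l1on S h)^2 ≤ (S.card : ℝ) * ∑ i ∈ S, (h i)^2 := by
        rw [l1on]; rw [h3] at h1; exact h1
    _ ≤ (S.card : ℝ) * sqnorm h := by
        exact mul_le_mul_of_nonneg_left h2 (Nat.cast_nonneg _)

lemma sqnorm_pos {n : ℕ} (h : Fin n → ℝ) (hh : h ≠ 0) : 0 < sqnorm h := by
  obtain ⟨i, hi⟩ := Function.ne_iff.mp hh
  have : (0:ℝ) < (h i)^2 := by rw [← sq_abs]; exact pow_pos (abs_pos.mpr hi) 2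
  exact lt_of_lt_of_le this
    (Finset.single_le_sum (fun j _ => sq_nonneg (h j)) (Finset.mem_univ i))

lemma rho_mul_le {m n : ℕ} (A : Matrix (Fin m) (Fin n) ℝ) (s : ℕ) (h : Fin n → ℝ)
    (hl0 : l0 h ≤ s) : rhoMinus A s * sqnorm h ≤ sqnorm (A.mulVec h) := by
  rcases eq_or_ne h 0 with rfl | hh
  · have : sqnorm (0 : Fin n → ℝ) = 0 := by simp [sqnorm]
    rw [this, mul_zero]
    exact sqnorm_nonneg _
  · have hpos := sqnorm_pos h hh
    have hbdd : BddBelow {r | ∃ x : Fin n → ℝ, x ≠ 0 ∧ l0 x ≤ s ∧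
        r = sqnorm (A.mulVec x) / sqnorm x} := by
      refine ⟨0, fun r hr => ?_⟩
      obtain ⟨y, _, _, rfl⟩ := hr
      exact div_nonneg (sqnorm_nonneg _) (sqnorm_nonneg _)
    have hmem : sqnorm (A.mulVec h) / sqnorm h ∈ {r | ∃ x : Fin n → ℝ, x ≠ 0 ∧ l0 x ≤ s ∧
        r = sqnorm (A.mulVec x) / sqnorm x} := ⟨h, hh, hl0, rfl⟩
    have hle : rhoMinus A s ≤ sqnorm (A.mulVec h) / sqnorm h := csInf_le hbdd hmem
    calc rhoMinus A s * sqnorm h ≤ (sqnorm (A.mulVec h) / sqnorm h) * sqnorm h :=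
          mul_le_mul_of_nonneg_right hle hpos.le
      _ = sqnorm (A.mulVec h) := div_mul_cancel₀ _ hpos.ne'


set_option maxHeartbeats 1000000 in
lemma core (T a c rho sb lam kap dp gam E : ℝ)
    (hT : 0 ≤ T) (ha : 0 ≤ a) (hc : 0 ≤ c) (hrho : 0 < rho) (hsb : 0 ≤ sb)
    (hlam : 0 < lam) (hkap : 0 ≤ kap) (hk4 : 4 * kap ≤ lam)
    (hdp0 : 0 < dp) (hdp1 : dp < 1)
    (hG2 : 2 < (1 - dp) * (1 + gam))
    (hkG : kap * (1 + gam) ≤ lam * ((1 - dp) * (1 + gam) - 2))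
    (hE : E * rho = 2 * dp * (1 + gam) * lam ^ 2 * sb)
    (hbase : T / 2 + (lam - kap) * c ≤ (lam + kap) * a + E)
    (hCS : rho * a ^ 2 ≤ sb * T) :
    T * rho ≤ 8 * (1 + gam) * lam ^ 2 * sb ∧ (a + c) * rho ≤ 4 * (1 + gam) * lam * sb := by
  have hGpos : 0 < 1 + gam := by nlinarith
  have hGgt2 : 2 < 1 + gam := by nlinarith [mul_pos hdp0 hGpos]
  have hR0 : (0:ℝ) ≤ 2 * dp * (1 + gam) * lam ^ 2 * sb := by positivity
  have hEr : 0 ≤ E * rho := hE ▸ hR0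
  have hE0 : 0 ≤ E := nonneg_of_mul_nonneg_right (by linarith [hEr] : 0 ≤ rho * E) hrho
  have hkd : kap + dp * lam < lam := by nlinarith
  rcases le_or_gt E (dp * lam * (a + c)) with h1 | h2
  · -- case 1
    have hden : 0 < lam - kap - dp * lam := by linarith
    have hT2 : T / 2 + (lam - kap - dp*lam) * c ≤ (lam + kap + dp*lam) * a := by linarith
    have hTa : T ≤ 2 * (lam + kap + dp*lam) * a := by
      linarith [mul_nonneg hden.le hc]
    have hKpos : 0 < lam + kap + dp * lam := by positivity
    have haK : rho * a ≤ 2 * (lam + kap + dp*lam) * sb := by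
      rcases eq_or_lt_of_le ha with ha0 | ha0
      · rw [← ha0]; simp; positivity
      · nlinarith [hCS, mul_le_mul_of_nonneg_left hTa hsb]
    have h5 : 0 ≤ gam * (lam - kap - dp*lam) - (lam + kap + dp*lam) := by linarith [hkG]
    have hcone : c ≤ gam * a := by
      have h6' : (lam - kap - dp*lam) * c ≤ (lam + kap + dp*lam) * a := by linarith
      have h6 : (lam - kap - dp*lam) * c ≤ (lam - kap - dp*lam) * (gam * a) := by
        linarith [h6', mul_nonneg h5 ha]
      exact le_of_mul_le_mul_left h6 hden
    have hKG : (lam + kap + dp*lam) * (1 + gam) ≤ 2*lam*(1+gam) - 2*lam := by linarith [hkG]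
    have hK2 : lam + kap + dp*lam < 2 * lam := by linarith
    constructor
    · have s1 : T * rho ≤ 2 * (lam + kap + dp*lam) * a * rho :=
        mul_le_mul_of_nonneg_right hTa hrho.le
      have s2 : 2 * (lam + kap + dp*lam) * (rho * a) ≤
          2 * (lam + kap + dp*lam) * (2 * (lam + kap + dp*lam) * sb) :=
        mul_le_mul_of_nonneg_left haK (by positivity)
      have s3' : (lam + kap + dp*lam)^2 ≤ 4 * lam^2 := by nlinarith
      have s3 : 4 * ((lam + kap + dp*lam)^2 * sb) ≤ 4 * (4 * lam^2 * sb) := by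
        linarith [mul_le_mul_of_nonneg_right s3' hsb]
      have s4 : 16 * lam^2 * sb ≤ 8 * (1 + gam) * lam^2 * sb := by
        linarith [mul_nonneg (by linarith : (0:ℝ) ≤ gam - 1) (mul_nonneg (sq_nonneg lam) hsb)]
      linarith [s1, s2, s3, s4]
    · have s5 : (a + c) * rho ≤ (1 + gam) * a * rho :=
        mul_le_mul_of_nonneg_right (by linarith) hrho.le
      have s6 : (1 + gam) * (rho * a) ≤ (1 + gam) * (2 * (lam + kap + dp*lam) * sb) :=
        mul_le_mul_of_nonneg_left haK hGpos.le
      have s7 : sb * ((lam + kap + dp*lam) * (1 + gam)) ≤ sb * (2*lam*(1+gam) - 2*lam) :=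
        mul_le_mul_of_nonneg_left hKG hsb
      linarith [s5, s6, s7, mul_nonneg hlam.le hsb]
  · -- case 2
    constructor
    · have hlk : 0 ≤ lam - kap := by linarith
      have u2 : T / 2 ≤ (lam + kap) * a + E := by linarith [mul_nonneg hlk hc]
      have u4 : rho * T ≤ 4 * ((lam + kap)^2 * sb) + 4 * (E * rho) := by
        rcases le_or_gt T 0 with hT0 | hT0
        · have : rho * T ≤ 0 := mul_nonpos_of_nonneg_of_nonpos hrho.le hT0
          linarith [mul_nonneg (sq_nonneg (lam+kap)) hsb, hEr]
        · have key : 0 ≤ rho * T + 4*((lam+kap)^2*sb) - 4*((lam+kap)*(rho*a)) := by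
            nlinarith [mul_nonneg hrho.le (sq_nonneg (T - 2*(lam+kap)*a)),
              mul_nonneg (sq_nonneg (lam+kap)) (sub_nonneg.mpr hCS), hT0]
          have u3 : rho * T ≤ 2*((lam+kap)*(rho*a)) + 2 * (E * rho) := by
            linarith [mul_le_mul_of_nonneg_left u2 hrho.le]
          linarith
      have hnu : 4 * (lam + kap)^2 ≤ 25/4 * lam^2 := by nlinarith
      have h7 : 4 * (lam+kap)^2 * sb ≤ 25/4 * lam^2 * sb :=
        mul_le_mul_of_nonneg_right hnu hsb
      have h8 : 25/4 * lam^2 * sb + 8 * dp * (1+gam) * lam^2 * sb ≤ 8 * (1+gam) * lam^2 * sb := by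
        linarith [mul_nonneg (by linarith : (0:ℝ) ≤ 8*(1-dp)*(1+gam) - 25/4)
          (mul_nonneg (sq_nonneg lam) hsb)]
      linarith [u4, h7, h8, hE]
    · have u1 : dp * lam * (a + c) * rho ≤ E * rho :=
        mul_le_mul_of_nonneg_right h2.le hrho.le
      have u5 : dp * lam * ((a + c) * rho) ≤ dp * lam * (2 * (1 + gam) * lam * sb) := by
        linarith [u1, hE]
      have := le_of_mul_le_mul_left u5 (by positivity : 0 < dp * lam)
      linarith [this, mul_nonneg (mul_nonneg hGpos.le hlam.le) hsb]


set_option maxHeartbeats 1000000 in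
theorem stmt4 {m n : ℕ} (A : Matrix (Fin m) (Fin n) ℝ) (b : Fin m → ℝ)
    (xbar : Fin n → ℝ) (z : Fin m → ℝ) (hb : b = A.mulVec xbar + z)
    (dp gam lam : ℝ) (hdp0 : 0 < dp) (hdp1 : dp < 1)
    (hgam : gam > (1 + dp) / (1 - dp))
    (hlam : 0 < lam) (hnoise : noiseCond A z dp gam lam)
    (st : ℕ) (hst : 1 ≤ st)
    (hrho : 0 < rhoMinus A ((supp xbar).card + st))
    (x : Fin n → ℝ) (hxsp : l0on (supp xbar)ᶜ x ≤ st)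
    (hobj : phi A b lam x ≤ phi A b lam xbar +
      2 * dp * (1 + gam) * lam ^ 2 * ((supp xbar).card : ℝ) /
        rhoMinus A ((supp xbar).card + st)) :
    max (1 / (2 * lam) * sqnorm (A.mulVec (x - xbar))) (l1 (x - xbar)) ≤
      4 * (1 + gam) * lam * ((supp xbar).card : ℝ) /
        rhoMinus A ((supp xbar).card + st) := by
  have hdq : 1 + dp < gam * (1 - dp) := by
    have hgam' : (1 + dp) / (1 - dp) < gam := hgam
    rwa [div_lt_iff₀ (by linarith : (0:ℝ) < 1 - dp)] at hgam'
  have hD : 0 < (1 - dp) * gam - (1 + dp) := by nlinarith [hdq]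
  have hG2 : 2 < (1 - dp) * (1 + gam) := by nlinarith [hdq]
  have hnoise' : lam ≥ max 4 ((gam + 1) / ((1 - dp) * gam - (1 + dp))) * linf (Aᵀ.mulVec z) :=
    hnoise
  have hkap0 : 0 ≤ linf (Aᵀ.mulVec z) := linf_nonneg _
  have hk4 : 4 * linf (Aᵀ.mulVec z) ≤ lam :=
    le_trans (mul_le_mul_of_nonneg_right (le_max_left _ _) hkap0) hnoise'
  have hkG : linf (Aᵀ.mulVec z) * (1 + gam) ≤ lam * ((1 - dp) * (1 + gam) - 2) := by
    have h1 : (gam + 1) / ((1 - dp) * gam - (1 + dp)) * linf (Aᵀ.mulVec z) ≤ lam :=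
      le_trans (mul_le_mul_of_nonneg_right (le_max_right _ _) hkap0) hnoise'
    have h2 := mul_le_mul_of_nonneg_right h1 hD.le
    rw [div_mul_eq_mul_div, div_mul_cancel₀ _ hD.ne'] at h2
    nlinarith [h2]
  -- abbreviations
  have hSc0 : ∀ i ∈ (supp xbar)ᶜ, xbar i = 0 := by
    intro i hi
    have := Finset.mem_compl.mp hi
    simpa [supp] using this
  have ha : 0 ≤ l1on (supp xbar) (x - xbar) := Finset.sum_nonneg fun i _ => abs_nonneg _
  have hc : 0 ≤ l1on (supp xbar)ᶜ (x - xbar) := Finset.sum_nonneg fun i _ => abs_nonneg _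
  have hl1h : l1 (x - xbar) = l1on (supp xbar) (x - xbar) + l1on (supp xbar)ᶜ (x - xbar) :=
    l1_split _ _
  -- sparsity of h
  have hl0 : l0 (x - xbar) ≤ (supp xbar).card + st := by
    have hsub : supp (x - xbar) ⊆
        supp xbar ∪ (supp xbar)ᶜ.filter (fun i => x i ≠ 0) := by
      intro i hi
      rw [Finset.mem_union]
      by_cases hiS : i ∈ supp xbar
      · exact Or.inl hiS
      · right
        rw [Finset.mem_filter]
        refine ⟨Finset.mem_compl.mpr hiS, ?_⟩
        have hxb : xbar i = 0 := by simpa [supp] using hiS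
        have hne : (x - xbar) i ≠ 0 := by simpa [supp] using hi
        simpa [Pi.sub_apply, hxb] using hne
    calc l0 (x - xbar) ≤ (supp xbar ∪ (supp xbar)ᶜ.filter (fun i => x i ≠ 0)).card :=
          Finset.card_le_card hsub
      _ ≤ (supp xbar).card + ((supp xbar)ᶜ.filter (fun i => x i ≠ 0)).card :=
          Finset.card_union_le _ _
      _ ≤ (supp xbar).card + st := add_le_add_right hxsp _
  -- Cauchy-Schwarz + restricted eigenvalue
  have hCS : rhoMinus A ((supp xbar).card + st) * (l1on (supp xbar) (x - xbar)) ^ 2 ≤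
      ((supp xbar).card : ℝ) * sqnorm (A.mulVec (x - xbar)) := by
    have c1 := mul_le_mul_of_nonneg_left (l1on_sq_le (supp xbar) (x - xbar)) hrho.le
    have c2 := mul_le_mul_of_nonneg_left (rho_mul_le A ((supp xbar).card + st) (x - xbar) hl0)
      (Nat.cast_nonneg (supp xbar).card : (0:ℝ) ≤ ((supp xbar).card : ℝ))
    nlinarith [c1, c2]
  -- objective expansion
  have hAxb : A.mulVec x - b = A.mulVec (x - xbar) - z := by
    rw [hb, Matrix.mulVec_sub]; abel
  have hAxbb : A.mulVec xbar - b = -z := by rw [hb]; abel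
  have hflsx : fls A b x = (sqnorm (A.mulVec (x - xbar)) -
      2 * dot (A.mulVec (x - xbar)) z + sqnorm z) / 2 := by
    rw [fls, hAxb, sqnorm_sub]
  have hflsxb : fls A b xbar = sqnorm z / 2 := by rw [fls, hAxbb, sqnorm_neg]
  have hdot2 : dot (A.mulVec (x - xbar)) z = dot (x - xbar) (Aᵀ.mulVec z) :=
    dot_mulVec A (x - xbar) z
  have hd3 : dot (x - xbar) (Aᵀ.mulVec z) ≤ linf (Aᵀ.mulVec z) *
      (l1on (supp xbar) (x - xbar) + l1on (supp xbar)ᶜ (x - xbar)) := by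
    rw [← hl1h]
    exact le_trans (le_abs_self _) (abs_dot_le _ _)
  -- l1 comparison
  have hxSc : l1on (supp xbar)ᶜ x = l1on (supp xbar)ᶜ (x - xbar) :=
    Finset.sum_congr rfl fun i hi => by rw [Pi.sub_apply, hSc0 i hi, sub_zero]
  have hxbSc : l1on (supp xbar)ᶜ xbar = 0 :=
    Finset.sum_eq_zero fun i hi => by rw [hSc0 i hi, abs_zero]
  have hSle : l1on (supp xbar) xbar ≤ l1on (supp xbar) x + l1on (supp xbar) (x - xbar) := by
    rw [l1on, l1on, l1on, ← Finset.sum_add_distrib]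
    refine Finset.sum_le_sum fun i _ => ?_
    have : xbar i = x i - (x - xbar) i := by simp
    rw [this]
    exact abs_sub _ _
  have hl1c : l1 xbar - l1 x ≤ l1on (supp xbar) (x - xbar) - l1on (supp xbar)ᶜ (x - xbar) := by
    rw [l1_split (supp xbar) xbar, l1_split (supp xbar) x, hxbSc, hxSc]
    linarith
  -- base inequality
  have hobj' := hobj
  rw [phi, phi, hflsx, hflsxb] at hobj'
  have hbase : sqnorm (A.mulVec (x - xbar)) / 2 +
      (lam - linf (Aᵀ.mulVec z)) * l1on (supp xbar)ᶜ (x - xbar) ≤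
      (lam + linf (Aᵀ.mulVec z)) * l1on (supp xbar) (x - xbar) +
      2 * dp * (1 + gam) * lam ^ 2 * ((supp xbar).card : ℝ) /
        rhoMinus A ((supp xbar).card + st) := by
    have hmul := mul_le_mul_of_nonneg_left hl1c hlam.le
    nlinarith [hobj', hd3, hdot2, hmul, hl1h]
  have hE : 2 * dp * (1 + gam) * lam ^ 2 * ((supp xbar).card : ℝ) /
        rhoMinus A ((supp xbar).card + st) * rhoMinus A ((supp xbar).card + st) =
      2 * dp * (1 + gam) * lam ^ 2 * ((supp xbar).card : ℝ) :=
    div_mul_cancel₀ _ hrho.ne'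
  obtain ⟨g1, g2⟩ := core (sqnorm (A.mulVec (x - xbar))) (l1on (supp xbar) (x - xbar))
    (l1on (supp xbar)ᶜ (x - xbar)) (rhoMinus A ((supp xbar).card + st))
    ((supp xbar).card : ℝ) lam (linf (Aᵀ.mulVec z)) dp gam
    (2 * dp * (1 + gam) * lam ^ 2 * ((supp xbar).card : ℝ) /
        rhoMinus A ((supp xbar).card + st))
    (sqnorm_nonneg _) ha hc hrho (Nat.cast_nonneg _) hlam hkap0 hk4 hdp0 hdp1 hG2 hkG
    hE hbase hCS
  apply max_le
  · rw [le_div_iff₀ hrho]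
    have h2l : (0:ℝ) < 1 / (2 * lam) := by positivity
    have := mul_le_mul_of_nonneg_right g1 h2l.le
    have heq : 8 * (1 + gam) * lam ^ 2 * ((supp xbar).card : ℝ) * (1 / (2 * lam)) =
        4 * (1 + gam) * lam * ((supp xbar).card : ℝ) := by
      field_simp; ring
    nlinarith [this, heq]
  · rw [le_div_iff₀ hrho, hl1h]
    linarith [g2]

end PGH
end
end
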